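/- Let x_n, x ∈ D([0,1],ℝ) with d_{M₂}(x_n, x) → 0, and let t ∈ (0,1) be a continuity point of x. Then x_n(t_n) → x(t) for every sequence t_n → t; in particular x_n converges to x uniformly on compact subintervals of [0,1] consisting of continuity points of x. -/

import Mathlib

open MeasureTheory Filter Topology Set

noncomputable section

/-- Càdlàg functions from `[0,1]` to `ℝ` (encoded as functions on `ℝ`, right-continuous
on `[0,1)` with left limits on `(0,1]`). -/
structure Cadlag : Type where
  f : ℝ → ℝ
  rightCont : ∀ t ∈ Set.Ico (0:ℝ) 1, Filter.Tendsto f (nhdsWithin t (Set.Ioi t)) (nhds (f t))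
  leftLimExists : ∀ t ∈ Set.Ioc (0:ℝ) 1,
    ∃ L, Filter.Tendsto f (nhdsWithin t (Set.Iio t)) (nhds L)

namespace Cadlag

/-- Left limit `x(t-)`, with the convention `x(0-) = x(0)`. -/
def lft (x : Cadlag) (t : ℝ) : ℝ := if t ≤ 0 then x.f 0 else Function.leftLim x.f t

/-- The set of discontinuity points of `x` in `(0,1]`. -/
def Disc (x : Cadlag) : Set ℝ := {t | t ∈ Set.Ioc (0:ℝ) 1 ∧ x.lft t ≠ x.f t}

/-- The completed graph `Γ_x`. -/
def graph (x : Cadlag) : Set (ℝ × ℝ) :=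
  {p | p.1 ∈ Set.Icc (0:ℝ) 1 ∧ p.2 ∈ Set.uIcc (x.lft p.1) (x.f p.1)}

/-- The order on the completed graph `Γ_x`. -/
def graphLE (x : Cadlag) (a b : ℝ × ℝ) : Prop :=
  a.1 < b.1 ∨ (a.1 = b.1 ∧ |x.lft a.1 - a.2| ≤ |x.lft b.1 - b.2|)

/-- A parametric representation of the completed graph `Γ_x`: a continuous
nondecreasing surjection `[0,1] → Γ_x`. -/
structure ParamRep (x : Cadlag) where
  r : ℝ → ℝ
  u : ℝ → ℝ
  contR : ContinuousOn r (Set.Icc 0 1)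
  contU : ContinuousOn u (Set.Icc 0 1)
  mono : ∀ s ∈ Set.Icc (0:ℝ) 1, ∀ t ∈ Set.Icc (0:ℝ) 1, s ≤ t →
    x.graphLE (r s, u s) (r t, u t)
  maps : ∀ s ∈ Set.Icc (0:ℝ) 1, (r s, u s) ∈ x.graph
  surj : ∀ p ∈ x.graph, ∃ s ∈ Set.Icc (0:ℝ) 1, (r s, u s) = p

end Cadlag

/-- The Skorohod `M₁` metric on `D([0,1],ℝ)`. -/
def dM1 (x y : Cadlag) : ℝ :=
  ⨅ (p : x.ParamRep) (q : y.ParamRep),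
    ⨆ t : Set.Icc (0:ℝ) 1, max |p.r t - q.r t| |p.u t - q.u t|

/-- The Skorohod `M₂` metric (Hausdorff distance between completed graphs). -/
def dM2 (x y : Cadlag) : ℝ :=
  max (⨆ a : x.graph, ⨅ b : y.graph,
        max |(a : ℝ × ℝ).1 - (b : ℝ × ℝ).1| |(a : ℝ × ℝ).2 - (b : ℝ × ℝ).2|)
      (⨆ a : y.graph, ⨅ b : x.graph,
        max |(a : ℝ × ℝ).1 - (b : ℝ × ℝ).1| |(a : ℝ × ℝ).2 - (b : ℝ × ℝ).2|)

/-- The Skorohod `J₁` metric on `D([0,1],ℝ)`. -/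
def dJ1 (x y : Cadlag) : ℝ :=
  ⨅ l : {l : ℝ → ℝ // ContinuousOn l (Set.Icc 0 1) ∧ StrictMonoOn l (Set.Icc 0 1) ∧
      Set.MapsTo l (Set.Icc 0 1) (Set.Icc 0 1) ∧ l 0 = 0 ∧ l 1 = 1},
    ⨆ t : Set.Icc (0:ℝ) 1, max |l.1 t - (t : ℝ)| |x.f (l.1 t) - y.f t|

lemma Cadlag.exists_bound (x : Cadlag) :
    ∃ M : ℝ, ∀ t ∈ Set.Icc (0:ℝ) 1, |x.f t| ≤ M := by
  have hloc : ∀ t ∈ Set.Icc (0:ℝ) 1, ∃ M : ℝ,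
      ∀ᶠ s in 𝓝 t, s ∈ Set.Icc (0:ℝ) 1 → |x.f s| ≤ M := by
    intro t ht
    have hR : ∃ MR : ℝ, ∀ᶠ s in 𝓝[>] t, s ∈ Set.Icc (0:ℝ) 1 → |x.f s| ≤ MR := by
      rcases lt_or_ge t 1 with ht1 | ht1
      · refine ⟨|x.f t| + 1, ?_⟩
        have h1 := (x.rightCont t ⟨ht.1, ht1⟩) (Metric.ball_mem_nhds _ one_pos)
        filter_upwards [h1] with s hs _
        have : |x.f s - x.f t| < 1 := by simpa [Real.dist_eq] using hs
        calc |x.f s| ≤ |x.f t| + |x.f s - x.f t| := by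
              have := abs_sub_abs_le_abs_sub (x.f s) (x.f t); linarith [abs_nonneg (x.f s - x.f t)]
          _ ≤ |x.f t| + 1 := by linarith
      · refine ⟨0, ?_⟩
        filter_upwards [self_mem_nhdsWithin] with s hs hs'
        exact absurd (lt_of_le_of_lt ht1 hs) (not_lt.2 hs'.2)
    have hL : ∃ ML : ℝ, ∀ᶠ s in 𝓝[<] t, s ∈ Set.Icc (0:ℝ) 1 → |x.f s| ≤ ML := by
      rcases lt_or_ge 0 t with ht0 | ht0
      · obtain ⟨L, hLt⟩ := x.leftLimExists t ⟨ht0, ht.2⟩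
        refine ⟨|L| + 1, ?_⟩
        have h1 := hLt (Metric.ball_mem_nhds _ one_pos)
        filter_upwards [h1] with s hs _
        have : |x.f s - L| < 1 := by simpa [Real.dist_eq] using hs
        calc |x.f s| ≤ |L| + |x.f s - L| := by
              have := abs_sub_abs_le_abs_sub (x.f s) L; linarith [abs_nonneg (x.f s - L)]
          _ ≤ |L| + 1 := by linarith
      · refine ⟨0, ?_⟩
        filter_upwards [self_mem_nhdsWithin] with s hs hs'
        exact absurd (lt_of_lt_of_le hs ht0) (not_lt.2 hs'.1)
    obtain ⟨MR, hMR⟩ := hR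
    obtain ⟨ML, hML⟩ := hL
    refine ⟨max (max MR ML) |x.f t|, ?_⟩
    rw [← nhdsNE_sup_pure, Filter.eventually_sup]
    constructor
    · rw [← nhdsLT_sup_nhdsGT, Filter.eventually_sup]
      constructor
      · filter_upwards [hML] with s hs hs'
        exact (hs hs').trans ((le_max_right _ _).trans (le_max_left _ _))
      · filter_upwards [hMR] with s hs hs'
        exact (hs hs').trans ((le_max_left _ _).trans (le_max_left _ _))
    · rw [Filter.eventually_pure]
      exact fun _ => le_max_right _ _
  choose M hM using hloc
  obtain ⟨T, hT⟩ := isCompact_Icc.elim_nhds_subcover'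
    (fun t ht => {s | s ∈ Set.Icc (0:ℝ) 1 → |x.f s| ≤ M t ht})
    (fun t ht => hM t ht)
  refine ⟨∑ t ∈ T, |M t t.2|, ?_⟩
  intro s hs
  obtain ⟨t, ht, hst⟩ := Set.mem_iUnion₂.1 (hT hs)
  calc |x.f s| ≤ M t t.2 := hst hs
    _ ≤ |M t t.2| := le_abs_self _
    _ ≤ ∑ t ∈ T, |M t t.2| := Finset.single_le_sum (f := fun t => |M t.1 t.2|) (fun i _ => abs_nonneg _) ht

lemma Cadlag.lft_bound (x : Cadlag) {M : ℝ} (hM : ∀ t ∈ Set.Icc (0:ℝ) 1, |x.f t| ≤ M) :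
    ∀ t ∈ Set.Icc (0:ℝ) 1, |x.lft t| ≤ M := by
  intro t ht
  rcases le_or_gt t 0 with ht0 | ht0
  · rw [Cadlag.lft, if_pos ht0]; exact hM 0 ⟨le_refl _, zero_le_one⟩
  · rw [Cadlag.lft, if_neg (not_le.2 ht0)]
    obtain ⟨L, hL⟩ := x.leftLimExists t ⟨ht0, ht.2⟩
    rw [leftLim_eq_of_tendsto hL]
    have hev : ∀ᶠ s in 𝓝[<] t, |x.f s| ≤ M := by
      have h1 : ∀ᶠ s in 𝓝[<] t, s ∈ Set.Ioi (0:ℝ) :=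
        nhdsWithin_le_nhds (Ioi_mem_nhds ht0)
      filter_upwards [h1, self_mem_nhdsWithin] with s hs0 hst
      exact hM s ⟨le_of_lt hs0, le_of_lt (lt_of_lt_of_le hst ht.2)⟩
    have : Filter.Tendsto (fun s => |x.f s|) (𝓝[<] t) (𝓝 |L|) := hL.abs
    exact le_of_tendsto this hev

lemma Cadlag.mem_graph_self (x : Cadlag) {t : ℝ} (ht : t ∈ Set.Icc (0:ℝ) 1) :
    (t, x.f t) ∈ x.graph := ⟨ht, Set.right_mem_uIcc⟩

lemma Cadlag.graph_nonempty (x : Cadlag) : x.graph.Nonempty :=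
  ⟨(0, x.f 0), x.mem_graph_self ⟨le_refl _, zero_le_one⟩⟩

lemma Cadlag.graph_bound (x : Cadlag) {M : ℝ} (hM : ∀ t ∈ Set.Icc (0:ℝ) 1, |x.f t| ≤ M)
    {p : ℝ × ℝ} (hp : p ∈ x.graph) : |p.2| ≤ M := by
  obtain ⟨h1, h2⟩ := hp
  have h3 := x.lft_bound hM p.1 h1
  have h4 := hM p.1 h1
  rw [Set.uIcc, Set.mem_Icc] at h2
  rw [abs_le] at h3 h4 ⊢
  exact ⟨le_trans (le_inf h3.1 h4.1) h2.1, le_trans h2.2 (sup_le h3.2 h4.2)⟩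

lemma dM2_point (x y : Cadlag) (a : ℝ × ℝ) (ha : a ∈ x.graph) {ε : ℝ} (hε : 0 < ε) :
    ∃ b ∈ y.graph, max |a.1 - b.1| |a.2 - b.2| < dM2 x y + ε := by
  obtain ⟨Mx, hMx⟩ := x.exists_bound
  obtain ⟨My, hMy⟩ := y.exists_bound
  set g : x.graph → ℝ := fun a => ⨅ b : y.graph,
    max |(a : ℝ × ℝ).1 - (b : ℝ × ℝ).1| |(a : ℝ × ℝ).2 - (b : ℝ × ℝ).2| with hg
  have hb0 : (0, y.f 0) ∈ y.graph := y.mem_graph_self ⟨le_refl _, zero_le_one⟩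
  have hgbd : ∀ a' : x.graph, g a' ≤ max 1 (|Mx| + |My|) := by
    intro a'
    have hle : g a' ≤ max |(a' : ℝ × ℝ).1 - 0| |(a' : ℝ × ℝ).2 - y.f 0| := by
      apply ciInf_le ⟨0, ?_⟩ (⟨(0, y.f 0), hb0⟩ : y.graph)
      rintro v ⟨b, rfl⟩
      exact le_max_of_le_left (abs_nonneg _)
    refine hle.trans (max_le_max ?_ ?_)
    · have h1 : (a' : ℝ × ℝ).1 ∈ Set.Icc (0:ℝ) 1 := a'.2.1
      rw [sub_zero, abs_of_nonneg h1.1]; exact h1.2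
    · have h2 := x.graph_bound hMx a'.2
      have h3 : |y.f 0| ≤ My := hMy 0 ⟨le_refl _, zero_le_one⟩
      calc |(a' : ℝ × ℝ).2 - y.f 0| ≤ |(a' : ℝ × ℝ).2| + |y.f 0| := abs_sub _ _
        _ ≤ |Mx| + |My| := add_le_add (h2.trans (le_abs_self _)) (h3.trans (le_abs_self _))
  have hbdd : BddAbove (Set.range g) := ⟨max 1 (|Mx| + |My|), by rintro v ⟨a', rfl⟩; exact hgbd a'⟩
  have hga : g ⟨a, ha⟩ ≤ dM2 x y := le_trans (le_ciSup hbdd ⟨a, ha⟩) (le_max_left _ _)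
  have hne : (Set.range fun b : y.graph =>
      max |a.1 - (b : ℝ × ℝ).1| |a.2 - (b : ℝ × ℝ).2|).Nonempty :=
    ⟨_, ⟨(⟨(0, y.f 0), hb0⟩ : y.graph), rfl⟩⟩
  obtain ⟨v, hvmem, hv⟩ := Real.lt_sInf_add_pos hne hε
  obtain ⟨b, rfl⟩ := hvmem
  refine ⟨b.1, b.2, ?_⟩
  have h2 : sInf (Set.range fun b : y.graph =>
      max |a.1 - (b:ℝ×ℝ).1| |a.2 - (b:ℝ×ℝ).2|) = g ⟨a, ha⟩ := rfl
  calc max |a.1 - (b:ℝ×ℝ).1| |a.2 - (b:ℝ×ℝ).2| < _ + ε := hv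
    _ ≤ dM2 x y + ε := by rw [h2]; exact add_le_add_left hga ε

lemma Cadlag.graph_osc (x : Cadlag) {s : ℝ} (hs : s ∈ Set.Icc (0:ℝ) 1) (hc : s ∉ x.Disc)
    {ε : ℝ} (hε : 0 < ε) :
    ∃ δ > 0, ∀ p ∈ x.graph, |p.1 - s| < δ → |p.2 - x.f s| ≤ ε := by
  have key : ∀ᶠ u in 𝓝 s, u ∈ Set.Icc (0:ℝ) 1 → |x.f u - x.f s| ≤ ε / 2 := by
    rw [← nhdsNE_sup_pure, Filter.eventually_sup]
    constructor
    · rw [← nhdsLT_sup_nhdsGT, Filter.eventually_sup]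
      constructor
      · rcases lt_or_ge 0 s with hs0 | hs0
        · have hlft : x.lft s = x.f s := by
            by_contra hne
            exact hc ⟨⟨hs0, hs.2⟩, hne⟩
          obtain ⟨L, hL⟩ := x.leftLimExists s ⟨hs0, hs.2⟩
          have hLeq : L = x.f s := by
            rw [Cadlag.lft, if_neg (not_le.2 hs0)] at hlft
            rw [← hlft, leftLim_eq_of_tendsto hL]
          rw [hLeq] at hL
          have := hL (Metric.closedBall_mem_nhds _ (half_pos hε))
          filter_upwards [this] with u hu _
          simpa [Real.dist_eq] using hu
        · have hs0' : s = 0 := le_antisymm hs0 hs.1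
          filter_upwards [self_mem_nhdsWithin] with u hu hu'
          exact absurd (lt_of_lt_of_le hu (le_of_eq hs0')) (not_lt.2 hu'.1)
      · rcases lt_or_ge s 1 with hs1 | hs1
        · have := (x.rightCont s ⟨hs.1, hs1⟩) (Metric.closedBall_mem_nhds _ (half_pos hε))
          filter_upwards [this] with u hu _
          simpa [Real.dist_eq] using hu
        · have hs1' : s = 1 := le_antisymm hs.2 hs1
          filter_upwards [self_mem_nhdsWithin] with u hu hu'
          exact absurd (lt_of_le_of_lt (le_of_eq hs1'.symm) hu) (not_lt.2 hu'.2)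
    · rw [Filter.eventually_pure]
      intro _
      simp [le_of_lt (half_pos hε)]
  rw [Metric.eventually_nhds_iff] at key
  obtain ⟨δ₀, hδ₀, hkey⟩ := key
  refine ⟨δ₀ / 2, half_pos hδ₀, ?_⟩
  rintro ⟨u, z⟩ ⟨hu1, hz⟩ hus
  simp only at hus hz hu1 ⊢
  have hfu : |x.f u - x.f s| ≤ ε / 2 := by
    refine hkey ?_ hu1
    rw [Real.dist_eq]; linarith [half_pos hδ₀]
  have hlft : |x.lft u - x.f s| ≤ ε / 2 := by
    rcases le_or_gt u 0 with hu0 | hu0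
    · have hu0' : u = 0 := le_antisymm hu0 hu1.1
      rw [Cadlag.lft, if_pos hu0, ← hu0']
      exact hfu
    · rw [Cadlag.lft, if_neg (not_le.2 hu0)]
      obtain ⟨L, hL⟩ := x.leftLimExists u ⟨hu0, hu1.2⟩
      rw [leftLim_eq_of_tendsto hL]
      have hIoo : Set.Ioo (max 0 (u - δ₀ / 2)) u ∈ 𝓝[<] u := by
        apply Ioo_mem_nhdsLT_of_mem
        constructor
        · exact max_lt hu0 (by linarith [half_pos hδ₀])
        · exact le_refl u
      have hev : ∀ᶠ v in 𝓝[<] u, |x.f v - x.f s| ≤ ε / 2 := by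
        filter_upwards [hIoo] with v hv
        have hv0 : (0:ℝ) < v := lt_of_le_of_lt (le_max_left _ _) hv.1
        have hvu : u - δ₀ / 2 < v := lt_of_le_of_lt (le_max_right _ _) hv.1
        refine hkey ?_ ⟨le_of_lt hv0, le_of_lt (lt_of_lt_of_le hv.2 hu1.2)⟩
        rw [Real.dist_eq, abs_lt]
        rw [abs_lt] at hus
        constructor <;> linarith [hv.2]
      have htend : Filter.Tendsto (fun v => |x.f v - x.f s|) (𝓝[<] u) (𝓝 |L - x.f s|) :=
        (hL.sub_const _).abs
      exact le_of_tendsto htend hev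
  rw [Set.uIcc, Set.mem_Icc] at hz
  rw [abs_le] at hfu hlft ⊢
  constructor
  · have := le_inf (by linarith : x.f s - ε ≤ x.lft u) (by linarith : x.f s - ε ≤ x.f u)
    linarith [le_trans this hz.1]
  · have := sup_le (by linarith : x.lft u ≤ x.f s + ε) (by linarith : x.f u ≤ x.f s + ε)
    linarith [le_trans hz.2 this]

lemma Cadlag.graph_osc_unif (x : Cadlag) {a b : ℝ} (ha : 0 ≤ a) (hab : a ≤ b) (hb : b ≤ 1)
    (hcont : ∀ s ∈ Set.Icc a b, s ∉ x.Disc) {ε : ℝ} (hε : 0 < ε) :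
    ∃ δ > 0, ∀ s ∈ Set.Icc a b, ∀ p ∈ x.graph, |p.1 - s| < δ → |p.2 - x.f s| ≤ ε := by
  have hsub : Set.Icc a b ⊆ Set.Icc (0:ℝ) 1 := Set.Icc_subset_Icc ha hb
  have hpt : ∀ s ∈ Set.Icc a b, ∃ δ, δ > 0 ∧ ∀ p ∈ x.graph, |p.1 - s| < δ → |p.2 - x.f s| ≤ ε/2 := by
    intro s hs
    obtain ⟨δ, hδ1, hδ2⟩ := x.graph_osc (hsub hs) (hcont s hs) (half_pos hε)
    exact ⟨δ, hδ1, hδ2⟩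
  choose δ hδpos hδ using hpt
  obtain ⟨T, hT⟩ := (isCompact_Icc : IsCompact (Set.Icc a b)).elim_nhds_subcover'
    (fun s hs => Metric.ball s (δ s hs / 2))
    (fun s hs => Metric.ball_mem_nhds _ (half_pos (hδpos s hs)))
  have hTne : T.Nonempty := by
    by_contra hTe
    rw [Finset.not_nonempty_iff_eq_empty] at hTe
    have := hT (Set.left_mem_Icc.2 hab)
    simp [hTe] at this
  refine ⟨T.inf' hTne (fun t => δ t.1 t.2 / 2), ?_, ?_⟩
  · rw [gt_iff_lt, Finset.lt_inf'_iff]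
    exact fun t _ => half_pos (hδpos t.1 t.2)
  · intro s hs p hp hps
    obtain ⟨i, hiT, hsi⟩ := Set.mem_iUnion₂.1 (hT hs)
    rw [Metric.mem_ball, Real.dist_eq] at hsi
    have hinf : T.inf' hTne (fun t => δ t.1 t.2 / 2) ≤ δ i.1 i.2 / 2 :=
      Finset.inf'_le _ hiT
    have h1 : |p.1 - i.1| < δ i.1 i.2 := by
      calc |p.1 - i.1| ≤ |p.1 - s| + |s - i.1| := abs_sub_le _ _ _
        _ < δ i.1 i.2 / 2 + δ i.1 i.2 / 2 := add_lt_add (lt_of_lt_of_le hps hinf) hsi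
        _ = δ i.1 i.2 := by ring
    have h2 : |p.2 - x.f i.1| ≤ ε / 2 := hδ i.1 i.2 p hp h1
    have h3 : |x.f s - x.f i.1| ≤ ε / 2 := by
      refine hδ i.1 i.2 (s, x.f s) (x.mem_graph_self (hsub hs)) ?_
      simpa using lt_of_lt_of_le hsi (by linarith [hδpos i.1 i.2])
    calc |p.2 - x.f s| ≤ |p.2 - x.f i.1| + |x.f i.1 - x.f s| := abs_sub_le _ _ _
      _ ≤ ε / 2 + ε / 2 := add_le_add h2 (by rwa [abs_sub_comm])
      _ = ε := by ring

/-- `M₂` convergence implies local uniform convergence at continuity points of the limit: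
if `d_{M₂}(xₙ,x) → 0` and `t ∈ (0,1)` is a continuity point of `x`, then `xₙ(tₙ) → x(t)`
for every sequence `tₙ → t` in `[0,1]`; moreover `xₙ → x` uniformly on every compact
subinterval of `[0,1]` consisting of continuity points of `x`. -/
theorem stmt18 (xn : ℕ → Cadlag) (x : Cadlag)
    (h : Tendsto (fun n => dM2 (xn n) x) atTop (𝓝 0))
    (t : ℝ) (ht : t ∈ Set.Ioo (0:ℝ) 1) (hc : t ∉ x.Disc) :
    (∀ tn : ℕ → ℝ, (∀ n, tn n ∈ Set.Icc (0:ℝ) 1) → Tendsto tn atTop (𝓝 t) →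
      Tendsto (fun n => (xn n).f (tn n)) atTop (𝓝 (x.f t))) ∧
    (∀ a b : ℝ, 0 ≤ a → a ≤ b → b ≤ 1 → (∀ s ∈ Set.Icc a b, s ∉ x.Disc) →
      Tendsto (fun n => ⨆ s : Set.Icc a b, |(xn n).f s - x.f s|) atTop (𝓝 0)) := by
  constructor
  · intro tn htn htend
    rw [Metric.tendsto_atTop]
    intro ε hε
    obtain ⟨δ, hδ, hosc⟩ := x.graph_osc ⟨le_of_lt ht.1, le_of_lt ht.2⟩ hc
      (by positivity : (0:ℝ) < ε / 3)
    have hmin : (0:ℝ) < min (δ / 2) (ε / 3) := lt_min (by positivity) (by positivity)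
    obtain ⟨N₁, hN₁⟩ := (Metric.tendsto_atTop.1 h) _ hmin
    obtain ⟨N₂, hN₂⟩ := (Metric.tendsto_atTop.1 htend) (δ / 2) (by positivity)
    refine ⟨max N₁ N₂, fun n hn => ?_⟩
    have hd : dM2 (xn n) x < min (δ / 2) (ε / 3) := by
      have := hN₁ n (le_trans (le_max_left _ _) hn)
      rw [Real.dist_eq, sub_zero] at this
      exact lt_of_le_of_lt (le_abs_self _) this
    have htn' : |tn n - t| < δ / 2 := by
      have := hN₂ n (le_trans (le_max_right _ _) hn)
      rwa [Real.dist_eq] at this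
    have hmem : (tn n, (xn n).f (tn n)) ∈ (xn n).graph := (xn n).mem_graph_self (htn n)
    have hε₀ : (0:ℝ) < min (δ / 2) (ε / 3) - dM2 (xn n) x := by linarith
    obtain ⟨p, hpg, hpd⟩ := dM2_point (xn n) x _ hmem hε₀
    rw [add_sub_cancel] at hpd
    have hp1 : |tn n - p.1| < δ / 2 := lt_of_le_of_lt (le_max_left _ _)
      (lt_of_lt_of_le hpd (min_le_left _ _))
    have hp2 : |(xn n).f (tn n) - p.2| < ε / 3 := lt_of_le_of_lt (le_max_right _ _)
      (lt_of_lt_of_le hpd (min_le_right _ _))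
    have hp1t : |p.1 - t| < δ := by
      calc |p.1 - t| ≤ |p.1 - tn n| + |tn n - t| := abs_sub_le _ _ _
        _ < δ / 2 + δ / 2 := add_lt_add (by rwa [abs_sub_comm]) htn'
        _ = δ := by ring
    have hosc' := hosc p hpg hp1t
    rw [Real.dist_eq]
    calc |(xn n).f (tn n) - x.f t| ≤ |(xn n).f (tn n) - p.2| + |p.2 - x.f t| :=
        abs_sub_le _ _ _
      _ < ε / 3 + ε / 3 := add_lt_add_of_lt_of_le hp2 hosc'
      _ < ε := by linarith
  · intro a b ha hab hb hcont
    rw [Metric.tendsto_atTop]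
    intro ε hε
    obtain ⟨δ, hδ, hosc⟩ := x.graph_osc_unif ha hab hb hcont (by positivity : (0:ℝ) < ε / 4)
    have hmin : (0:ℝ) < min δ (ε / 4) := lt_min hδ (by positivity)
    obtain ⟨N, hN⟩ := (Metric.tendsto_atTop.1 h) _ hmin
    refine ⟨N, fun n hn => ?_⟩
    have hd : dM2 (xn n) x < min δ (ε / 4) := by
      have := hN n hn
      rw [Real.dist_eq, sub_zero] at this
      exact lt_of_le_of_lt (le_abs_self _) this
    have hbdd : ∀ s : Set.Icc a b, |(xn n).f s - x.f s| ≤ ε / 2 := by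
      rintro ⟨s, hs⟩
      have hmem : (s, (xn n).f s) ∈ (xn n).graph :=
        (xn n).mem_graph_self (Set.Icc_subset_Icc ha hb hs)
      have hε₀ : (0:ℝ) < min δ (ε / 4) - dM2 (xn n) x := by linarith
      obtain ⟨p, hpg, hpd⟩ := dM2_point (xn n) x _ hmem hε₀
      rw [add_sub_cancel] at hpd
      have hp1 : |s - p.1| < δ := lt_of_le_of_lt (le_max_left _ _)
        (lt_of_lt_of_le hpd (min_le_left _ _))
      have hp2 : |(xn n).f s - p.2| < ε / 4 := lt_of_le_of_lt (le_max_right _ _)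
        (lt_of_lt_of_le hpd (min_le_right _ _))
      have hosc' := hosc s hs p hpg (by rwa [abs_sub_comm])
      calc |(xn n).f s - x.f s| ≤ |(xn n).f s - p.2| + |p.2 - x.f s| := abs_sub_le _ _ _
        _ ≤ ε / 4 + ε / 4 := add_le_add (le_of_lt hp2) hosc'
        _ = ε / 2 := by ring
    have hsup_le : (⨆ s : Set.Icc a b, |(xn n).f s - x.f s|) ≤ ε / 2 :=
      Real.iSup_le hbdd (by positivity)
    have hsup_nonneg : 0 ≤ ⨆ s : Set.Icc a b, |(xn n).f s - x.f s| :=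
      Real.iSup_nonneg (fun s => abs_nonneg _)
    rw [Real.dist_eq, sub_zero, abs_of_nonneg hsup_nonneg]
    linarith
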